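/- arXiv:hep-th/0104018 — 3 statements merged into one kernel-verified Lean document; each statement's English description precedes it below -/
import Mathlib

section
/- For 0 < |x| < 1 and z = ζ² ≠ 0, the function g(z) defined by the double infinite product satisfies ζ g(z)/g(z⁻¹) = κ(ζ), where κ(ζ) = ζ (x⁴z; x⁴)∞ (x²z⁻¹; x⁴)∞ / ((x⁴z⁻¹; x⁴)∞ (x²z; x⁴)∞). -/
/-- Infinite product `(a; p)∞ = ∏_{k ≥ 0} (1 − a p^k)`. -/
noncomputable def poch (a p : ℂ) : ℂ := ∏' k : ℕ, (1 - a * p ^ k)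

/-- Double infinite product `(a; p₁, p₂)∞`. -/
noncomputable def dpoch (a p₁ p₂ : ℂ) : ℂ := ∏' k : ℕ × ℕ, (1 - a * p₁ ^ k.1 * p₂ ^ k.2)

/-- The function `g(z)`. -/
noncomputable def gfun (x z : ℂ) : ℂ :=
  dpoch (x^6 * z) (x^4) (x^4) * dpoch (x^2 * z⁻¹) (x^4) (x^4) /
    (dpoch (x^8 * z) (x^4) (x^4) * dpoch (x^4 * z⁻¹) (x^4) (x^4))

/-- The normalization factor `κ(ζ)`, `z = ζ²`. -/
noncomputable def kappa (x ζ : ℂ) : ℂ :=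
  ζ * (poch (x^4 * ζ^2) (x^4) * poch (x^2 * (ζ^2)⁻¹) (x^4)) /
    (poch (x^4 * (ζ^2)⁻¹) (x^4) * poch (x^2 * ζ^2) (x^4))

open Complex Filter in
/-- A tprod with a zero factor is zero. -/
lemma my_tprod_zero_of_factor_zero {ι : Type*} (f : ι → ℂ) (i0 : ι) (h : f i0 = 0) :
    ∏' i, f i = 0 := by
  have hp : HasProd f 0 := by
    rw [HasProd]
    apply Filter.Tendsto.congr' _ tendsto_const_nhds
    filter_upwards [Filter.eventually_ge_atTop ({i0} : Finset ι)] with s hs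
    exact (Finset.prod_eq_zero (hs (Finset.mem_singleton_self i0)) h).symm
  exact hp.tprod_eq

open Complex Filter in
lemma my_summable_log_one_sub {ι : Type*} (u : ι → ℂ) (hu : Summable u) :
    Summable fun i => Complex.log (1 - u i) := by
  apply Summable.of_norm_bounded_eventually (g := fun i => 3/2 * ‖u i‖) (hu.norm.mul_left _)
  have h := hu.tendsto_cofinite_zero
  have hball : ∀ᶠ w : ℂ in nhds 0, ‖w‖ ≤ 1/2 := by
    have hm : Metric.closedBall (0:ℂ) (1/2) ∈ nhds (0:ℂ) :=
      Metric.closedBall_mem_nhds 0 (by norm_num)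
    filter_upwards [hm] with w hw
    simpa [Metric.mem_closedBall, dist_eq_norm] using hw
  filter_upwards [h.eventually hball] with i hi
  calc ‖Complex.log (1 - u i)‖ = ‖Complex.log (1 + (-u i))‖ := by rw [sub_eq_add_neg]
    _ ≤ 3/2 * ‖-u i‖ := Complex.norm_log_one_add_half_le_self (by simpa using hi)
    _ = 3/2 * ‖u i‖ := by rw [norm_neg]

open Complex in
lemma my_multipliable_one_sub {ι : Type*} (u : ι → ℂ) (hu : Summable u) :
    Multipliable fun i => 1 - u i := by
  by_cases h0 : ∃ i, (1:ℂ) - u i = 0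
  · obtain ⟨i0, hi0⟩ := h0
    refine ⟨0, ?_⟩
    rw [HasProd]
    apply Filter.Tendsto.congr' _ tendsto_const_nhds
    filter_upwards [Filter.eventually_ge_atTop ({i0} : Finset ι)] with s hs
    exact (Finset.prod_eq_zero (hs (Finset.mem_singleton_self i0)) hi0).symm
  · push_neg at h0
    exact Complex.multipliable_of_summable_log (my_summable_log_one_sub u hu)

open Complex in
lemma my_tprod_one_sub_ne_zero {ι : Type*} (u : ι → ℂ) (hu : Summable u)
    (h0 : ∀ i, (1:ℂ) - u i ≠ 0) : (∏' i, (1 - u i)) ≠ 0 := by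
  have h2 := Complex.cexp_tsum_eq_tprod (f := fun i => 1 - u i) h0 (my_summable_log_one_sub u hu)
  rw [← h2]
  exact Complex.exp_ne_zero _

lemma my_summable_geom (e p : ℂ) (hp : ‖p‖ < 1) : Summable fun k : ℕ => e * p ^ k :=
  (summable_geometric_of_norm_lt_one hp).mul_left e

lemma my_summable_geom2 (e p : ℂ) (hp : ‖p‖ < 1) :
    Summable fun k : ℕ × ℕ => e * p ^ k.1 * p ^ k.2 := by
  have h1 : Summable fun k : ℕ => ‖e * p ^ k‖ := by
    simp only [norm_mul, norm_pow]
    exact ((summable_geometric_of_lt_one (norm_nonneg p) hp).mul_left ‖e‖)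
  have h2 : Summable fun k : ℕ => ‖p ^ k‖ := by
    simp only [norm_pow]
    exact summable_geometric_of_lt_one (norm_nonneg p) hp
  exact summable_mul_of_summable_norm (f := fun k : ℕ => e * p ^ k)
    (g := fun k : ℕ => p ^ k) h1 h2

lemma my_poch_ne_zero (e p : ℂ) (hp : ‖p‖ < 1) (h : ∀ k : ℕ, e * p ^ k ≠ 1) :
    poch e p ≠ 0 := by
  rw [poch]
  exact my_tprod_one_sub_ne_zero _ (my_summable_geom e p hp)
    (fun k => sub_ne_zero_of_ne (fun hEq => h k hEq.symm))

lemma my_poch_eq_zero (e p : ℂ) (h : ∃ k : ℕ, e * p ^ k = 1) : poch e p = 0 := by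
  obtain ⟨k, hk⟩ := h
  rw [poch]
  exact my_tprod_zero_of_factor_zero _ k (by rw [hk]; ring)

lemma my_dpoch_shift_ne_zero (e p : ℂ) (hp : ‖p‖ < 1) (h : ∀ k : ℕ, e * p ^ k ≠ 1) :
    dpoch (e * p) p p ≠ 0 := by
  rw [dpoch]
  refine my_tprod_one_sub_ne_zero _ (my_summable_geom2 (e * p) p hp) (fun k => ?_)
  refine sub_ne_zero_of_ne (fun hEq => h (k.1 + k.2 + 1) ?_)
  rw [show e * p ^ (k.1 + k.2 + 1) = e * p * p ^ k.1 * p ^ k.2 by ring]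
  exact hEq.symm

/-- The key identity : `(a; p, p)∞ = (a; p)∞ · (ap; p, p)∞`. -/
lemma my_dpoch_split (e p : ℂ) (hp : ‖p‖ < 1) :
    dpoch e p p = poch e p * dpoch (e * p) p p := by
  classical
  have hfib : ∀ b : ℕ, Multipliable fun c : ℕ => 1 - e * p ^ b * p ^ c := fun b =>
    my_multipliable_one_sub (fun c => e * p ^ b * p ^ c) (my_summable_geom (e * p ^ b) p hp)
  have hd : Multipliable fun k : ℕ × ℕ => 1 - e * p ^ k.1 * p ^ k.2 :=
    my_multipliable_one_sub _ (my_summable_geom2 e p hp)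
  set g : ℕ → ℂ := fun b => ∏' c : ℕ, (1 - e * p ^ b * p ^ c) with hgdef
  have hgP : HasProd g (dpoch e p p) := by
    rw [dpoch]
    exact HasProd.prod_fiberwise hd.hasProd (fun b => (hfib b).hasProd)
  -- the shifted outer product equals `dpoch (e*p) p p`
  have hfib2 : ∀ b : ℕ, Multipliable fun c : ℕ => 1 - e * p * p ^ b * p ^ c := fun b =>
    my_multipliable_one_sub (fun c => e * p * p ^ b * p ^ c)
      (my_summable_geom (e * p * p ^ b) p hp)
  have hd2 : Multipliable fun k : ℕ × ℕ => 1 - e * p * p ^ k.1 * p ^ k.2 :=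
    my_multipliable_one_sub _ (my_summable_geom2 (e * p) p hp)
  have hgshift : HasProd (fun b => g (b + 1)) (dpoch (e * p) p p) := by
    have h2 : HasProd (fun b : ℕ => ∏' c : ℕ, (1 - e * p * p ^ b * p ^ c))
        (dpoch (e * p) p p) := by
      rw [dpoch]
      exact HasProd.prod_fiberwise hd2.hasProd (fun b => (hfib2 b).hasProd)
    refine h2.congr_fun (fun b => ?_)
    simp only [hgdef]
    congr 1
    funext c
    rw [show e * p ^ (b + 1) * p ^ c = e * p * p ^ b * p ^ c by ring]
  have hsplit : ∏' b, g b = g 0 * ∏' b, g (b + 1) :=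
    tprod_eq_zero_mul' hgshift.multipliable
  have hg0 : g 0 = poch e p := by
    simp only [hgdef, poch, pow_zero, mul_one]
  rw [← hgP.tprod_eq, hsplit, hg0, hgshift.tprod_eq]

/-- `ζ g(z)/g(z⁻¹) = κ(ζ)` with `z = ζ²`. -/
theorem kappa_eq_g_ratio (x ζ : ℂ) (hx0 : x ≠ 0) (hx : ‖x‖ < 1) (hζ : ζ ≠ 0) :
    ζ * gfun x (ζ^2) / gfun x ((ζ^2)⁻¹) = kappa x ζ := by
  have hp : ‖(x^4 : ℂ)‖ < 1 := by
    rw [norm_pow]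
    exact pow_lt_one₀ (norm_nonneg x) hx (by norm_num)
  set p : ℂ := x ^ 4 with hpdef
  -- abbreviations for the four base points
  set a : ℂ := x ^ 4 * ζ ^ 2 with hadef
  set b : ℂ := x ^ 2 * ζ ^ 2 with hbdef
  set c : ℂ := x ^ 2 * (ζ ^ 2)⁻¹ with hcdef
  set d : ℂ := x ^ 4 * (ζ ^ 2)⁻¹ with hddef
  have hgz : gfun x (ζ ^ 2) =
      dpoch (b * p) p p * (poch c p * dpoch (c * p) p p) /
        (dpoch (a * p) p p * (poch d p * dpoch (d * p) p p)) := by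
    rw [gfun, show x ^ 6 * ζ ^ 2 = b * p by rw [hbdef, hpdef]; ring,
      show x ^ 8 * ζ ^ 2 = a * p by rw [hadef, hpdef]; ring,
      show x ^ 2 * (ζ ^ 2)⁻¹ = c from hcdef.symm,
      show x ^ 4 * (ζ ^ 2)⁻¹ = d from hddef.symm,
      my_dpoch_split c p hp, my_dpoch_split d p hp]
  have hgzi : gfun x ((ζ ^ 2)⁻¹) =
      dpoch (c * p) p p * (poch b p * dpoch (b * p) p p) /
        (dpoch (d * p) p p * (poch a p * dpoch (a * p) p p)) := by
    rw [gfun, show x ^ 6 * (ζ ^ 2)⁻¹ = c * p by rw [hcdef, hpdef]; ring,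
      show x ^ 8 * (ζ ^ 2)⁻¹ = d * p by rw [hddef, hpdef]; ring,
      show x ^ 2 * ((ζ ^ 2)⁻¹)⁻¹ = b by rw [inv_inv],
      show x ^ 4 * ((ζ ^ 2)⁻¹)⁻¹ = a by rw [inv_inv],
      my_dpoch_split b p hp, my_dpoch_split a p hp]
  have hk : kappa x ζ = ζ * (poch a p * poch c p) / (poch d p * poch b p) := by
    rw [kappa]
  rw [hgz, hgzi, hk]
  by_cases hA : ∀ k : ℕ, a * p ^ k ≠ 1
  · by_cases hB : ∀ k : ℕ, b * p ^ k ≠ 1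
    · by_cases hC : ∀ k : ℕ, c * p ^ k ≠ 1
      · by_cases hD : ∀ k : ℕ, d * p ^ k ≠ 1
        · -- nondegenerate case
          have hPa := my_poch_ne_zero a p hp hA
          have hPb := my_poch_ne_zero b p hp hB
          have hPc := my_poch_ne_zero c p hp hC
          have hPd := my_poch_ne_zero d p hp hD
          have hDa := my_dpoch_shift_ne_zero a p hp hA
          have hDb := my_dpoch_shift_ne_zero b p hp hB
          have hDc := my_dpoch_shift_ne_zero c p hp hC
          have hDd := my_dpoch_shift_ne_zero d p hp hD
          rw [div_eq_div_iff (div_ne_zero (mul_ne_zero hDc (mul_ne_zero hPb hDb))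
            (mul_ne_zero hDd (mul_ne_zero hPa hDa))) (mul_ne_zero hPd hPb)]
          field_simp
        · push_neg at hD
          rw [my_poch_eq_zero d p hD]
          simp
      · push_neg at hC
        rw [my_poch_eq_zero c p hC]
        simp
    · push_neg at hB
      rw [my_poch_eq_zero b p hB]
      simp
  · push_neg at hA
    rw [my_poch_eq_zero a p hA]
    simp
end

section
/- The normalization factor κ satisfies the crossing relation κ(ζ) κ(εxζ) = ε b(ζ) for ε = ±1, where b(ζ) = x(ζ² − 1)/(1 − x²ζ²). -/
lemma summable_log_poch {a p : ℂ} (hp : ‖p‖ < 1) (h : ∀ k : ℕ, 1 - a * p ^ k ≠ 0) :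
    Summable fun k : ℕ => Complex.log (1 - a * p ^ k) := by
  have hgeo : Summable fun k : ℕ => (3 / 2 : ℝ) * (‖a‖ * ‖p‖ ^ k) :=
    ((summable_geometric_of_lt_one (norm_nonneg p) hp).mul_left ‖a‖).mul_left _
  refine hgeo.of_norm_bounded_eventually_nat ?_
  have htend : Filter.Tendsto (fun k : ℕ => ‖a‖ * ‖p‖ ^ k) Filter.atTop (nhds 0) := by
    simpa using (tendsto_pow_atTop_nhds_zero_of_lt_one (norm_nonneg p) hp).const_mul ‖a‖
  filter_upwards [htend.eventually_le_const (by norm_num : (0:ℝ) < 1/2)] with k hk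
  have h1 : ‖-(a * p ^ k)‖ ≤ 1 / 2 := by
    simpa [norm_mul, norm_pow] using hk
  calc ‖Complex.log (1 - a * p ^ k)‖ = ‖Complex.log (1 + -(a * p ^ k))‖ := by
        rw [sub_eq_add_neg]
    _ ≤ 3 / 2 * ‖-(a * p ^ k)‖ := Complex.norm_log_one_add_half_le_self h1
    _ = 3 / 2 * (‖a‖ * ‖p‖ ^ k) := by simp [norm_mul, norm_pow]

lemma multipliable_poch {a p : ℂ} (hp : ‖p‖ < 1) (h : ∀ k : ℕ, 1 - a * p ^ k ≠ 0) :
    Multipliable fun k : ℕ => 1 - a * p ^ k :=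
  Complex.multipliable_of_summable_log (summable_log_poch hp h)

lemma poch_ne_zero {a p : ℂ} (hp : ‖p‖ < 1) (h : ∀ k : ℕ, 1 - a * p ^ k ≠ 0) :
    poch a p ≠ 0 := by
  have := Complex.cexp_tsum_eq_tprod (f := fun k : ℕ => 1 - a * p ^ k)
    (fun k => h k) (summable_log_poch hp h)
  rw [poch, ← this]
  exact Complex.exp_ne_zero _

lemma poch_shift {a p : ℂ} (hp : ‖p‖ < 1) (h : ∀ k : ℕ, 1 - a * p * p ^ k ≠ 0) :
    poch a p = (1 - a) * poch (a * p) p := by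
  have hm : Multipliable fun n : ℕ => 1 - a * p ^ (n + 1) := by
    have := multipliable_poch hp h
    simpa [pow_succ, mul_comm, mul_assoc, mul_left_comm] using this
  have := tprod_eq_zero_mul' (f := fun k : ℕ => 1 - a * p ^ k) hm
  rw [poch, poch, this]
  simp [pow_succ, mul_comm, mul_assoc, mul_left_comm]


noncomputable def bw (x ζ : ℂ) : ℂ := x * (ζ^2 - 1) / (1 - x^2 * ζ^2)

/-- Crossing relation `κ(ζ) κ(εxζ) = ε b(ζ)` for `ε = ±1`. -/
theorem kappa_crossing (x ζ ε : ℂ) (hx0 : x ≠ 0) (hx : ‖x‖ < 1)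
    (hζ : ζ ≠ 0) (hε : ε = 1 ∨ ε = -1)
    (hfac : ∀ k : ℕ, ∀ ξ ∈ ({ζ, ε * x * ζ} : Set ℂ),
      1 - x^4 * ξ^2 * (x^4) ^ k ≠ 0 ∧ 1 - x^2 * ξ^2 * (x^4) ^ k ≠ 0 ∧
      1 - x^4 * (ξ^2)⁻¹ * (x^4) ^ k ≠ 0 ∧ 1 - x^2 * (ξ^2)⁻¹ * (x^4) ^ k ≠ 0) :
    kappa x ζ * kappa x (ε * x * ζ) = ε * bw x ζ := by
  have hq : ‖(x^4 : ℂ)‖ < 1 := by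
    rw [norm_pow]
    exact pow_lt_one₀ (norm_nonneg x) (by simpa using hx) (by norm_num)
  have hξ2 : (ε * x * ζ)^2 = x^2 * ζ^2 := by
    rcases hε with h | h <;> subst h <;> ring
  have hA := fun k => (hfac k ζ (by simp)).1
  have hB := fun k => (hfac k ζ (by simp)).2.1
  have hC := fun k => (hfac k ζ (by simp)).2.2.1
  have hD := fun k => (hfac k ζ (by simp)).2.2.2
  have hA' := fun k => (hfac k (ε * x * ζ) (by simp)).1
  have hB' := fun k => (hfac k (ε * x * ζ) (by simp)).2.1
  have hC' := fun k => (hfac k (ε * x * ζ) (by simp)).2.2.1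
  have hD' := fun k => (hfac k (ε * x * ζ) (by simp)).2.2.2
  rw [hξ2] at hA' hB' hC' hD'
  have hz2 : (ζ:ℂ)^2 ≠ 0 := pow_ne_zero _ hζ
  have hx2 : (x:ℂ)^2 ≠ 0 := pow_ne_zero _ hx0
  -- argument simplifications
  have a1 : x^2 * ((x^2 * ζ^2))⁻¹ = (ζ^2)⁻¹ := by field_simp
  have a2 : x^4 * ((x^2 * ζ^2))⁻¹ = x^2 * (ζ^2)⁻¹ := by field_simp
  have a3 : x^2 * (x^2 * ζ^2) = x^4 * ζ^2 := by ring
  -- nonzero poch values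
  have hP1 : poch (x^4 * ζ^2) (x^4) ≠ 0 := poch_ne_zero hq hA
  have hP2 : poch (x^2 * (ζ^2)⁻¹) (x^4) ≠ 0 := poch_ne_zero hq hD
  have hP3 : poch (x^4 * (ζ^2)⁻¹) (x^4) ≠ 0 := poch_ne_zero hq hC
  have hP5 : poch (x^4 * (x^2 * ζ^2)) (x^4) ≠ 0 := poch_ne_zero hq hA'
  -- shift identities
  have s1 : poch ((ζ^2)⁻¹) (x^4) = (1 - (ζ^2)⁻¹) * poch ((ζ^2)⁻¹ * x^4) (x^4) := by
    refine poch_shift hq ?_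
    intro k
    have := hC k
    rwa [show x^4 * (ζ^2)⁻¹ = (ζ^2)⁻¹ * x^4 by ring] at this
  have s2 : poch (x^2 * ζ^2) (x^4) = (1 - x^2 * ζ^2) * poch ((x^2 * ζ^2) * x^4) (x^4) := by
    refine poch_shift hq ?_
    intro k
    have := hA' k
    intro hcon
    apply this
    rw [← hcon]
    ring
  have e1 : (ζ^2)⁻¹ * x^4 = x^4 * (ζ^2)⁻¹ := by ring
  have e2 : (x^2 * ζ^2) * x^4 = x^4 * (x^2 * ζ^2) := by ring
  rw [e1] at s1
  rw [e2] at s2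
  have hB0 := hB 0
  simp only [pow_zero, mul_one] at hB0
  rw [kappa, kappa, hξ2, a1, a2, a3, s1, s2, bw]
  set P1 := poch (x^4 * ζ^2) (x^4) with hP1d
  set P2 := poch (x^2 * (ζ^2)⁻¹) (x^4) with hP2d
  set P3 := poch (x^4 * (ζ^2)⁻¹) (x^4) with hP3d
  set P5 := poch (x^4 * (x^2 * ζ^2)) (x^4) with hP5d
  have h1z : (1 : ℂ) - (ζ^2)⁻¹ = (ζ^2 - 1) / ζ^2 := by field_simp
  rw [h1z]
  field_simp
end

section
/- With ψ(z) = 1/((xz; x⁴)∞ (xz⁻¹; x⁴)∞), the identity g(z) g(x²z) ψ(xz) = 1/(1 − x²z) holds for all z ≠ 0 in the region of convergence where all factors are nonzero. -/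
/-- The kernel `ψ(z) = 1/((xz; x⁴)∞ (xz⁻¹; x⁴)∞)`. -/
noncomputable def psi (x z : ℂ) : ℂ := (poch (x * z) (x^4) * poch (x * z⁻¹) (x^4))⁻¹

section Aux

open Complex Filter

/-- Summability of logarithms of `1 + g i` for absolutely summable `g`. -/
lemma aux_summable_log {ι : Type*} (g : ι → ℂ) (hg : Summable fun i => ‖g i‖) :
    Summable fun i => Complex.log (1 + g i) := by
  refine Summable.of_norm_bounded_eventually (g := fun i => 3/2 * ‖g i‖) (hg.mul_left _) ?_
  have h0 : Filter.Tendsto (fun i => ‖g i‖) Filter.cofinite (nhds 0) :=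
    hg.tendsto_cofinite_zero
  filter_upwards [h0.eventually (eventually_le_nhds (by norm_num : (0:ℝ) < 1/2))] with i hi
  exact Complex.norm_log_one_add_half_le_self hi

/-- A tprod of nonzero factors with summable log equals exp of the sum of logs. -/
lemma aux_tprod_eq_exp {ι : Type*} (f : ι → ℂ) (hne : ∀ i, f i ≠ 0)
    (hs : Summable fun i => Complex.log (f i)) :
    ∏' i, f i = Complex.exp (∑' i, Complex.log (f i)) := by
  have := Complex.cexp_tsum_eq_tprod hne hs
  exact this.symm

noncomputable def logS (a p : ℂ) : ℂ := ∑' k : ℕ, Complex.log (1 - a * p ^ k)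

noncomputable def logT (a p : ℂ) : ℂ := ∑' k : ℕ × ℕ, Complex.log (1 - a * p ^ k.1 * p ^ k.2)

lemma aux_summableS (a p : ℂ) (hp : ‖p‖ < 1) :
    Summable fun k : ℕ => Complex.log (1 - a * p ^ k) := by
  have h : ∀ k : ℕ, (1 : ℂ) - a * p ^ k = 1 + (-(a * p ^ k)) := fun k => by ring
  simp only [h]
  apply aux_summable_log
  simp only [norm_neg, norm_mul, norm_pow]
  exact (summable_geometric_of_lt_one (norm_nonneg p) hp).mul_left _

lemma aux_summableT (a p : ℂ) (hp : ‖p‖ < 1) :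
    Summable fun k : ℕ × ℕ => Complex.log (1 - a * p ^ k.1 * p ^ k.2) := by
  have h : ∀ k : ℕ × ℕ, (1 : ℂ) - a * p ^ k.1 * p ^ k.2
      = 1 + (-(a * p ^ k.1 * p ^ k.2)) := fun k => by ring
  simp only [h]
  apply aux_summable_log
  simp only [norm_neg, norm_mul, norm_pow]
  have hgeo : Summable fun k : ℕ => ‖p‖ ^ k :=
    summable_geometric_of_lt_one (norm_nonneg p) hp
  exact (hgeo.mul_left ‖a‖).mul_of_nonneg hgeo
    (fun k => mul_nonneg (norm_nonneg a) (pow_nonneg (norm_nonneg p) k))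
    (fun k => pow_nonneg (norm_nonneg p) k)

lemma aux_poch_eq_exp (a p : ℂ) (hp : ‖p‖ < 1) (hne : ∀ k : ℕ, 1 - a * p ^ k ≠ 0) :
    poch a p = Complex.exp (logS a p) :=
  aux_tprod_eq_exp _ hne (aux_summableS a p hp)

lemma aux_dpoch_eq_exp (a p : ℂ) (hp : ‖p‖ < 1) (hne : ∀ k : ℕ, 1 - a * p ^ k ≠ 0) :
    dpoch a p p = Complex.exp (logT a p) := by
  apply aux_tprod_eq_exp
  · intro k
    have := hne (k.1 + k.2)
    rwa [pow_add, ← mul_assoc] at this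
  · exact aux_summableT a p hp

lemma aux_logS_shift (a b p : ℂ) (hp : ‖p‖ < 1) (hb : b = a * p) :
    logS a p = Complex.log (1 - a) + logS b p := by
  rw [logS, Summable.tsum_eq_zero_add (aux_summableS a p hp)]
  congr 1
  · rw [pow_zero, mul_one]
  · rw [logS]
    apply tsum_congr
    intro k
    congr 2
    rw [hb]; ring

lemma aux_summableSfam (a p : ℂ) (hp : ‖p‖ < 1) :
    Summable fun k1 : ℕ => logS (a * p ^ k1) p :=
  (aux_summableT a p hp).prod

lemma aux_logT_eq (a p : ℂ) (hp : ‖p‖ < 1) :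
    logT a p = ∑' k1 : ℕ, logS (a * p ^ k1) p := by
  rw [logT, Summable.tsum_prod (aux_summableT a p hp)]
  rfl

lemma aux_logT_shift (a b p : ℂ) (hp : ‖p‖ < 1) (hb : b = a * p) :
    logT a p = logS a p + logT b p := by
  rw [aux_logT_eq a p hp, aux_logT_eq b p hp,
    Summable.tsum_eq_zero_add (aux_summableSfam a p hp)]
  congr 1
  · rw [pow_zero, mul_one]
  · apply tsum_congr
    intro k
    congr 1
    rw [hb]; ring

end Aux

/-- The identity `g(z) g(x²z) ψ(xz) = 1/(1 − x²z)`. -/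
theorem g_g_psi (x z : ℂ) (hx0 : x ≠ 0) (hx : ‖x‖ < 1) (hz : z ≠ 0)
    (hfac : ∀ a ∈ ({x^6 * z, x^2 * z⁻¹, x^8 * z, x^4 * z⁻¹, x^10 * z, z⁻¹, x^2 * z} : Set ℂ),
      ∀ k : ℕ, 1 - a * (x^4) ^ k ≠ 0) :
    gfun x z * gfun x (x^2 * z) * psi x (x * z) = 1 / (1 - x^2 * z) := by
  have hp : ‖x ^ 4‖ < 1 := by
    rw [norm_pow]
    exact pow_lt_one₀ (norm_nonneg x) hx (by norm_num)
  have h6 : ∀ k : ℕ, 1 - (x^6 * z) * (x^4) ^ k ≠ 0 := hfac _ (by simp)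
  have h2' : ∀ k : ℕ, 1 - (x^2 * z⁻¹) * (x^4) ^ k ≠ 0 := hfac _ (by simp)
  have h8 : ∀ k : ℕ, 1 - (x^8 * z) * (x^4) ^ k ≠ 0 := hfac _ (by simp)
  have h4' : ∀ k : ℕ, 1 - (x^4 * z⁻¹) * (x^4) ^ k ≠ 0 := hfac _ (by simp)
  have h10 : ∀ k : ℕ, 1 - (x^10 * z) * (x^4) ^ k ≠ 0 := hfac _ (by simp)
  have h0' : ∀ k : ℕ, 1 - z⁻¹ * (x^4) ^ k ≠ 0 := hfac _ (by simp)
  have h2 : ∀ k : ℕ, 1 - (x^2 * z) * (x^4) ^ k ≠ 0 := hfac _ (by simp)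
  have hne20 : (1 : ℂ) - x^2 * z ≠ 0 := by simpa using h2 0
  rw [gfun, gfun, psi]
  rw [show x^6 * (x^2 * z) = x^8 * z by ring,
    show x^2 * (x^2 * z)⁻¹ = z⁻¹ by field_simp,
    show x^8 * (x^2 * z) = x^10 * z by ring,
    show x^4 * (x^2 * z)⁻¹ = x^2 * z⁻¹ by field_simp,
    show x * (x * z) = x^2 * z by ring,
    show x * (x * z)⁻¹ = z⁻¹ by field_simp]
  rw [aux_dpoch_eq_exp _ _ hp h6, aux_dpoch_eq_exp _ _ hp h2',
    aux_dpoch_eq_exp _ _ hp h8, aux_dpoch_eq_exp _ _ hp h4',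
    aux_dpoch_eq_exp _ _ hp h10, aux_dpoch_eq_exp _ _ hp h0',
    aux_poch_eq_exp _ _ hp h2, aux_poch_eq_exp _ _ hp h0']
  simp only [← Complex.exp_add, ← Complex.exp_sub, ← Complex.exp_neg]
  rw [one_div, ← Complex.exp_log hne20, ← Complex.exp_neg]
  congr 1
  rw [aux_logT_shift (x^6 * z) (x^10 * z) (x^4) hp (by ring),
    aux_logT_shift z⁻¹ (x^4 * z⁻¹) (x^4) hp (by ring),
    aux_logS_shift (x^2 * z) (x^6 * z) (x^4) hp (by ring)]
  ring
end
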